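/- Fix integers k ≥ 1, m ≥ 3, and n ≥ 3 with 2cos((m−2)π/(m−1)) ≤ 4cos²(π/n) − 2. Let x_n = 2cos(π/n), λ(x,y) = x² − y − (y−2)(y+2−x²)S_k(y)S_{k−1}(y), α(x,y) = 1 + (y+2−x²)S_{k−1}(y)(S_k(y)−S_{k−1}(y)), and φ(x,y) = S_{m−1}(λ(x,y))·α(x,y) − S_{m−2}(λ(x,y)). Then φ(x_n, ·) has a real root y_n > 2. -/

import Mathlib

noncomputable def S : ℕ → ℝ → ℝ
  | 0, _ => 1
  | 1, z => z
  | n + 2, z => z * S (n + 1) z - S n z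

noncomputable def lam (k : ℕ) (x y : ℝ) : ℝ :=
  x ^ 2 - y - (y - 2) * (y + 2 - x ^ 2) * S k y * S (k - 1) y

noncomputable def alpha (k : ℕ) (x y : ℝ) : ℝ :=
  1 + (y + 2 - x ^ 2) * S (k - 1) y * (S k y - S (k - 1) y)

lemma S_cont : ∀ n : ℕ, Continuous (S n)
  | 0 => by simpa [S] using continuous_const
  | 1 => by simpa [S] using continuous_id'
  | (n + 2) => by
      have h1 := S_cont (n + 1)
      have h2 := S_cont n
      show Continuous fun z => z * S (n + 1) z - S n z
      exact (continuous_id.mul h1).sub h2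

lemma S_sin : ∀ (j : ℕ) (θ : ℝ),
    S j (2 * Real.cos θ) * Real.sin θ = Real.sin ((j + 1) * θ)
  | 0, θ => by simp [S]
  | 1, θ => by
      have : ((1 : ℕ) + 1 : ℝ) * θ = θ + θ := by push_cast; ring
      rw [this, Real.sin_add]
      simp [S]; ring
  | (j + 2), θ => by
      have h1 := S_sin (j + 1) θ
      have h2 := S_sin j θ
      have key : Real.sin (((j : ℝ) + 2 + 1) * θ)
          = 2 * Real.cos θ * Real.sin (((j : ℝ) + 1 + 1) * θ) - Real.sin (((j : ℝ) + 1) * θ) := by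
        have e1 : ((j : ℝ) + 2 + 1) * θ = ((j : ℝ) + 1 + 1) * θ + θ := by ring
        have e2 : ((j : ℝ) + 1) * θ = ((j : ℝ) + 1 + 1) * θ - θ := by ring
        rw [e1, e2, Real.sin_add, Real.sin_sub]; ring
      show (2 * Real.cos θ * S (j + 1) (2 * Real.cos θ) - S j (2 * Real.cos θ)) * Real.sin θ
          = Real.sin ((↑(j + 2) + 1) * θ)
      push_cast at h1 h2 ⊢
      rw [key, ← h1, ← h2]; ring

lemma S_ge (y : ℝ) (hy : 2 ≤ y) : ∀ n : ℕ, 1 ≤ S n y ∧ S n y ≤ S (n + 1) y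
  | 0 => by refine ⟨le_refl _, ?_⟩; show (1 : ℝ) ≤ y; linarith
  | (n + 1) => by
      obtain ⟨h1, h2⟩ := S_ge y hy n
      have h3 : S (n + 2) y = y * S (n + 1) y - S n y := by simp [S]
      constructor
      · linarith
      · rw [h3]; nlinarith

lemma S_neg : ∀ (n : ℕ) (y : ℝ), S n (-y) = (-1) ^ n * S n y
  | 0, y => by simp [S]
  | 1, y => by simp [S]
  | (n + 2), y => by
      have h1 := S_neg (n + 1) y
      have h2 := S_neg n y
      show -y * S (n + 1) (-y) - S n (-y) = (-1) ^ (n + 2) * (y * S (n + 1) y - S n y)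
      rw [h1, h2]; ring

lemma S_neg_ge (n : ℕ) (z : ℝ) (hz : z ≤ -2) : 1 ≤ (-1) ^ n * S n z := by
  have h := (S_ge (-z) (by linarith) n).1
  rwa [S_neg n z] at h

theorem riley_root_J_2k1_2m (k m n : ℕ) (hk : 1 ≤ k) (hm : 3 ≤ m) (hn : 3 ≤ n)
    (hc : 2 * Real.cos (((m : ℝ) - 2) * Real.pi / ((m : ℝ) - 1)) ≤
      4 * Real.cos (Real.pi / n) ^ 2 - 2) :
    ∃ y : ℝ, 2 < y ∧
      S (m - 1) (lam k (2 * Real.cos (Real.pi / n)) y) * alpha k (2 * Real.cos (Real.pi / n)) y -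
        S (m - 2) (lam k (2 * Real.cos (Real.pi / n)) y) = 0 := by
  obtain ⟨m', rfl⟩ : ∃ m', m = m' + 3 := ⟨m - 3, by omega⟩
  push_cast at hc
  set x : ℝ := 2 * Real.cos (Real.pi / n) with hxdef
  have hm1 : m' + 3 - 1 = m' + 2 := by omega
  have hm2 : m' + 3 - 2 = m' + 1 := by omega
  have hπ := Real.pi_pos
  have hMpos : (0 : ℝ) < (m' : ℝ) + 2 := by positivity
  have hne : ((m' : ℝ) + 2) ≠ 0 := ne_of_gt hMpos
  -- the critical angle and value
  set θc : ℝ := (((m' : ℝ) + 3) - 2) * Real.pi / (((m' : ℝ) + 3) - 1) with hθdef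
  set c : ℝ := 2 * Real.cos θc with hcdef
  have hd1 : ((m' : ℝ) + 3 - 2) = (m' : ℝ) + 1 := by ring
  have hd2 : ((m' : ℝ) + 3 - 1) = (m' : ℝ) + 2 := by ring
  have hθc : θc = Real.pi - Real.pi / ((m' : ℝ) + 2) := by
    rw [hθdef, hd1, hd2]; field_simp; ring
  have hsθ : Real.sin θc = Real.sin (Real.pi / ((m' : ℝ) + 2)) := by
    rw [hθc, Real.sin_pi_sub]
  have hspos : 0 < Real.sin (Real.pi / ((m' : ℝ) + 2)) := by
    apply Real.sin_pos_of_pos_of_lt_pi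
    · positivity
    · rw [div_lt_iff₀ hMpos]; nlinarith
  -- S_{m-2}(c) = 0
  have hSm2 : S (m' + 1) c = 0 := by
    have h := S_sin (m' + 1) θc
    have e : ((m' : ℝ) + 1 + 1) * θc = ((m' + 1 : ℕ) : ℝ) * Real.pi := by
      push_cast; rw [hθdef, hd1, hd2]; field_simp; ring
    push_cast at h
    rw [e, Real.sin_nat_mul_pi, hsθ] at h
    rcases mul_eq_zero.mp h with h' | h'
    · exact h'
    · exact absurd h' (ne_of_gt hspos)
  -- S_{m-1}(c) = (-1)^m
  have hSm1 : S (m' + 2) c = (-1) ^ (m' + 3) := by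
    have h := S_sin (m' + 2) θc
    have e : ((m' : ℝ) + 2 + 1) * θc
        = ((m' + 2 : ℕ) : ℝ) * Real.pi - Real.pi / ((m' : ℝ) + 2) := by
      push_cast; rw [hθdef, hd1, hd2]; field_simp; ring
    push_cast at h
    rw [e, Real.sin_nat_mul_pi_sub, hsθ] at h
    have h2 : S (m' + 2) c * Real.sin (Real.pi / ((m' : ℝ) + 2))
        = (-1) ^ (m' + 3) * Real.sin (Real.pi / ((m' : ℝ) + 2)) := by
      rw [h]; ring
    exact mul_right_cancel₀ (ne_of_gt hspos) h2
  -- basic bounds on x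
  have hx4 : x ^ 2 ≤ 4 := by
    have h1 := Real.neg_one_le_cos (Real.pi / n)
    have h2 := Real.cos_le_one (Real.pi / n)
    rw [hxdef]; nlinarith
  have hcle : c ≤ x ^ 2 - 2 := by
    rw [hcdef, hθdef, hxdef]; nlinarith [hc]
  -- bounds on S for y ≥ 2
  have hSk1 : ∀ y : ℝ, 2 ≤ y → 1 ≤ S (k - 1) y := fun y hy => (S_ge y hy (k - 1)).1
  have hSk : ∀ y : ℝ, 2 ≤ y → 1 ≤ S k y := fun y hy => (S_ge y hy k).1
  have hSmono : ∀ y : ℝ, 2 ≤ y → S (k - 1) y ≤ S k y := by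
    intro y hy
    have := (S_ge y hy (k - 1)).2
    rwa [Nat.sub_add_cancel hk] at this
  -- lam bounds
  have hlam_le : ∀ y : ℝ, 2 ≤ y → lam k x y ≤ x ^ 2 - y := by
    intro y hy
    have h1 := hSk1 y hy
    have h2 := hSk y hy
    have h3 : 0 ≤ y + 2 - x ^ 2 := by linarith
    have h4 : (0:ℝ) ≤ (y - 2) * (y + 2 - x ^ 2) * S k y * S (k - 1) y :=
      mul_nonneg (mul_nonneg (mul_nonneg (by linarith) h3) (by linarith)) (by linarith)
    unfold lam; linarith
  have hlam2 : lam k x 2 = x ^ 2 - 2 := by unfold lam; ring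
  -- continuity
  have hlamc : Continuous fun y => lam k x y := by
    unfold lam
    exact ((continuous_const.sub continuous_id).sub
      ((((continuous_id.sub continuous_const).mul
        ((continuous_id.add continuous_const).sub continuous_const)).mul (S_cont k)).mul
        (S_cont (k - 1))))
  have halc : Continuous fun y => alpha k x y := by
    unfold alpha
    exact continuous_const.add
      ((((continuous_id.add continuous_const).sub continuous_const).mul
        (S_cont (k - 1))).mul ((S_cont k).sub (S_cont (k - 1))))
  -- alpha positivity
  have hapos : ∀ y : ℝ, 2 ≤ y → 0 < alpha k x y := by
    intro y hy
    have h1 := hSk1 y hy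
    have h2 := hSmono y hy
    have h3 : 0 ≤ y + 2 - x ^ 2 := by linarith
    have h4 : (0:ℝ) ≤ (y + 2 - x ^ 2) * S (k - 1) y * (S k y - S (k - 1) y) :=
      mul_nonneg (mul_nonneg h3 (by linarith)) (by linarith)
    unfold alpha; linarith
  -- find y_c with lam x y_c = c via IVT
  set Y0 : ℝ := max 2 (x ^ 2 - c + 1) with hY0def
  have hY0ge2 : 2 ≤ Y0 := le_max_left _ _
  have hY0lam : lam k x Y0 ≤ c - 1 := by
    have h1 := hlam_le Y0 hY0ge2
    have h2 : x ^ 2 - c + 1 ≤ Y0 := le_max_right _ _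
    linarith
  have hIVT1 : c ∈ Set.Icc (lam k x Y0) (lam k x 2) := by
    constructor
    · linarith
    · rw [hlam2]; exact hcle
  obtain ⟨yc, hycmem, hyc'⟩ := intermediate_value_Icc' hY0ge2 hlamc.continuousOn hIVT1
  have hyc : lam k x yc = c := hyc'
  have hyc2 : 2 ≤ yc := hycmem.1
  -- value of φ at yc
  have hφyc : S (m' + 2) (lam k x yc) * alpha k x yc - S (m' + 1) (lam k x yc)
      = (-1) ^ (m' + 3) * alpha k x yc := by
    rw [hyc, hSm1, hSm2]; ring
  -- large Y
  set Y1 : ℝ := max yc (x ^ 2 + 2) + 1 with hY1def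
  have hY1yc : yc < Y1 := by
    have := le_max_left yc (x ^ 2 + 2); rw [hY1def]; linarith
  have hY1ge2 : 2 ≤ Y1 := by linarith
  have hY1lam : lam k x Y1 ≤ -2 := by
    have h := hlam_le Y1 hY1ge2
    have h2 : x ^ 2 + 2 ≤ max yc (x ^ 2 + 2) := le_max_right _ _
    have h3 : x ^ 2 - Y1 ≤ -3 := by rw [hY1def]; linarith
    linarith
  have hφY1 : 0 < (-1) ^ (m' + 2) *
      (S (m' + 2) (lam k x Y1) * alpha k x Y1 - S (m' + 1) (lam k x Y1)) := by
    have h1 := S_neg_ge (m' + 2) (lam k x Y1) hY1lam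
    have h2 := S_neg_ge (m' + 1) (lam k x Y1) hY1lam
    have h3 := hapos Y1 hY1ge2
    have e : (-1:ℝ) ^ (m' + 2) *
        (S (m' + 2) (lam k x Y1) * alpha k x Y1 - S (m' + 1) (lam k x Y1))
        = ((-1:ℝ) ^ (m' + 2) * S (m' + 2) (lam k x Y1)) * alpha k x Y1
          + (-1:ℝ) ^ (m' + 1) * S (m' + 1) (lam k x Y1) := by
      rw [pow_succ]; ring
    rw [e]
    have h5 : 0 < ((-1:ℝ) ^ (m' + 2) * S (m' + 2) (lam k x Y1)) * alpha k x Y1 :=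
      mul_pos (by linarith) h3
    linarith
  -- IVT for g = (-1)^(m'+3) * φ
  set g : ℝ → ℝ := fun y => (-1) ^ (m' + 3) *
      (S (m' + 2) (lam k x y) * alpha k x y - S (m' + 1) (lam k x y)) with hgdef
  have hpow : ((-1 : ℝ)) ^ (m' + 3) * (-1) ^ (m' + 3) = 1 := by
    rw [← pow_add]
    exact Even.neg_one_pow ⟨m' + 3, by ring⟩
  have hgyc : 0 < g yc := by
    show 0 < (-1 : ℝ) ^ (m' + 3) *
      (S (m' + 2) (lam k x yc) * alpha k x yc - S (m' + 1) (lam k x yc))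
    rw [hφyc, ← mul_assoc, hpow, one_mul]
    exact hapos yc hyc2
  have hgY1 : g Y1 < 0 := by
    show (-1 : ℝ) ^ (m' + 3) *
      (S (m' + 2) (lam k x Y1) * alpha k x Y1 - S (m' + 1) (lam k x Y1)) < 0
    have e : ((-1 : ℝ)) ^ (m' + 3) = -((-1 : ℝ)) ^ (m' + 2) := by rw [pow_succ]; ring
    rw [e]; linarith [hφY1]
  have hgc : Continuous g := by
    rw [hgdef]
    exact continuous_const.mul
      ((((S_cont (m' + 2)).comp hlamc).mul halc).sub ((S_cont (m' + 1)).comp hlamc))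
  have hIVT2 : (0 : ℝ) ∈ Set.Icc (g Y1) (g yc) := ⟨le_of_lt hgY1, le_of_lt hgyc⟩
  obtain ⟨ξ, hξmem, hξ⟩ := intermediate_value_Icc' (le_of_lt hY1yc) hgc.continuousOn hIVT2
  have hξne : ξ ≠ yc := by
    intro h; rw [h] at hξ; rw [hξ] at hgyc; exact lt_irrefl 0 hgyc
  have hξ2 : 2 < ξ := lt_of_le_of_lt hyc2 (lt_of_le_of_ne hξmem.1 (Ne.symm hξne))
  refine ⟨ξ, hξ2, ?_⟩
  have hξ0 : (-1 : ℝ) ^ (m' + 3) *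
      (S (m' + 2) (lam k x ξ) * alpha k x ξ - S (m' + 1) (lam k x ξ)) = 0 := hξ
  have hpne : ((-1 : ℝ)) ^ (m' + 3) ≠ 0 := pow_ne_zero _ (by norm_num)
  have hφξ : S (m' + 2) (lam k x ξ) * alpha k x ξ - S (m' + 1) (lam k x ξ) = 0 :=
    (mul_eq_zero.mp hξ0).resolve_left hpne
  rw [hm1, hm2]
  exact hφξ
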